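/- For every β > 0, neither M₁(β) ⊆ M₂(β) nor M₂(β) ⊆ M₁(β) holds: there exist (λ,μ) with λ,μ > 0 satisfying βμ² - 2μ + λ ≤ 0 but βμ² - 4μ + 4λ ≥ 0, and there exist (λ,μ) with λ,μ > 0 satisfying βμ² - 4μ + 4λ < 0 but βμ² - 2μ + λ > 0. -/

import Mathlib

/-- Neither `M₁(β) ⊆ M₂(β)` nor `M₂(β) ⊆ M₁(β)`. -/
theorem stmt_14 (beta : ℝ) (hbeta : 0 < beta) :
    (∃ lam mu : ℝ, 0 < lam ∧ 0 < mu ∧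
      beta * mu ^ 2 - 2 * mu + lam ≤ 0 ∧ 0 ≤ beta * mu ^ 2 - 4 * mu + 4 * lam) ∧
    (∃ lam mu : ℝ, 0 < lam ∧ 0 < mu ∧
      beta * mu ^ 2 - 4 * mu + 4 * lam < 0 ∧ 0 < beta * mu ^ 2 - 2 * mu + lam) := by
  have hb := hbeta.ne'
  constructor
  · refine ⟨1 / beta, 1 / beta, by positivity, by positivity, ?_, ?_⟩
    · have h1 : beta * (1 / beta) ^ 2 - 2 * (1 / beta) + 1 / beta = 0 := by
        field_simp; ring
      rw [h1]
    · have h1 : beta * (1 / beta) ^ 2 - 4 * (1 / beta) + 4 * (1 / beta)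
          = 1 / beta := by field_simp; ring
      rw [h1]
      positivity
  · refine ⟨1 / (2 * beta), 2 / beta, by positivity, by positivity, ?_, ?_⟩
    · have h1 : beta * (2 / beta) ^ 2 - 4 * (2 / beta) + 4 * (1 / (2 * beta))
          = -(2 / beta) := by field_simp; ring
      rw [h1]
      simp only [neg_neg_iff_pos]
      positivity
    · have h1 : beta * (2 / beta) ^ 2 - 2 * (2 / beta) + 1 / (2 * beta)
          = 1 / (2 * beta) := by field_simp; ring
      rw [h1]
      positivity
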